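/- The set of Kolmogorov-random numbers {x : K(x) ≥ x} is not recursive (in fact its complement {x : K(x) < x} is recursively enumerable but the set itself is not recursively enumerable for x beyond some bound, hence the set is not recursive). -/

import Mathlib

/-- The e-th partial recursive function. -/
def phi (e : ℕ) : ℕ →. ℕ := (Denumerable.ofNat Nat.Partrec.Code e).eval

/-- A predicate on ℕ is recursively enumerable if it is the domain of a
partial recursive function. -/
def REPred' (p : ℕ → Prop) : Prop :=
  ∃ f : ℕ →. ℕ, Partrec f ∧ ∀ n, p n ↔ (f n).Dom

/-- Kolmogorov complexity: the least index `e` such that φ_e(0) = x. -/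
noncomputable def Kc (x : ℕ) : ℕ := sInf {e | x ∈ phi e 0}

open Nat.Partrec (Code)
open Nat.Partrec.Code

lemma phi_encode (c : Code) : phi (Encodable.encode c) = c.eval := by
  simp [phi]

lemma Kc_mem (x : ℕ) : x ∈ phi (Kc x) 0 :=
  Nat.sInf_mem (s := {e | x ∈ phi e 0})
    ⟨Encodable.encode (Code.const x), by simp [phi_encode, eval_const]⟩

lemma Kc_le {x e : ℕ} (h : x ∈ phi e 0) : Kc x ≤ e := Nat.sInf_le h

lemma Kc_inj : Function.Injective Kc := fun x y h => by
  have hx := Kc_mem x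
  have hy := Kc_mem y
  rw [h] at hx
  exact Part.mem_unique hx hy

/-- infinitely many codes outputting 0 -/
def Z (k : ℕ) : ℕ := Encodable.encode ((Code.const 0).comp (Code.const k))

lemma Z_inj : Function.Injective Z := fun a b h => by
  have := Encodable.encode_injective h
  simp only [Code.comp.injEq] at this
  exact const_inj this.2

lemma phi_Z (k : ℕ) : phi (Z k) 0 = Part.some 0 := by
  simp [Z, phi_encode, eval, eval_const, Seq.seq, pure, PFun.pure, Part.bind_eq_bind, Part.bind_some]
  exact (Part.bind_some _ _).trans (by simp [eval_const])

lemma rand_unbounded (n : ℕ) : ∃ x, n ≤ x ∧ x ≤ Kc x := by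
  by_contra hc
  push_neg at hc
  -- all x ≥ n are compressible; wlog consider m = max n 1
  set m := max n 1 with hm
  have hcomp : ∀ x, m ≤ x → Kc x < x := fun x hx =>
    hc x (le_trans (le_max_left _ _) hx)
  set M := max m ((Finset.range (m + 2)).sup Z + 1) with hM
  have hmM : m ≤ M := le_max_left _ _
  have hZM : ∀ k ∈ Finset.range (m + 2), Z k < M := fun k hk =>
    lt_of_lt_of_le (Nat.lt_succ_of_le (Finset.le_sup hk)) (le_max_right _ _)
  set A := (Finset.Ico m M).image Kc with hA
  set B := (Finset.range (m + 2)).image Z with hB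
  have cardA : A.card = M - m := by
    rw [hA, Finset.card_image_of_injective _ Kc_inj, Nat.card_Ico]
  have cardB : B.card = m + 2 := by
    rw [hB, Finset.card_image_of_injective _ Z_inj, Finset.card_range]
  have hAsub : A ⊆ Finset.range M := by
    intro e he
    rw [hA] at he
    obtain ⟨x, hx, rfl⟩ := Finset.mem_image.1 he
    rw [Finset.mem_Ico] at hx
    exact Finset.mem_range.2 (lt_trans (hcomp x hx.1) hx.2)
  have hBsub : B ⊆ Finset.range M := by
    intro e he
    obtain ⟨k, hk, rfl⟩ := Finset.mem_image.1 he
    exact Finset.mem_range.2 (hZM k hk)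
  have hdisj : Disjoint A B := by
    rw [Finset.disjoint_left]
    rintro e he he'
    obtain ⟨x, hx, rfl⟩ := Finset.mem_image.1 he
    obtain ⟨k, hk, hZk⟩ := Finset.mem_image.1 he'
    rw [Finset.mem_Ico] at hx
    have hx0 : x ∈ phi (Z k) 0 := hZk ▸ Kc_mem x
    rw [phi_Z] at hx0
    have : x = 0 := Part.mem_some_iff.1 hx0
    omega
  have := Finset.card_le_card (Finset.union_subset hAsub hBsub)
  rw [Finset.card_union_of_disjoint hdisj, cardA, cardB, Finset.card_range] at this
  omega

lemma Kc_lt_iff (x : ℕ) : Kc x < x ↔ ∃ e, e < x ∧ x ∈ phi e 0 := by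
  constructor
  · intro h
    exact ⟨Kc x, h, Kc_mem x⟩
  · rintro ⟨e, he, hx⟩
    exact lt_of_le_of_lt (Kc_le hx) he

def bnd (x n : ℕ) : Bool :=
  decide (n.unpair.2 < x ∧
    evaln n.unpair.1 (Denumerable.ofNat Code n.unpair.2) 0 = some x)

lemma bnd_prim : Primrec₂ bnd := by
  have heval : Primrec fun p : ℕ × ℕ =>
      evaln p.2.unpair.1 (Denumerable.ofNat Code p.2.unpair.2) 0 :=
    primrec_evaln.comp <|
      ((((Primrec.fst.comp Primrec.unpair).comp Primrec.snd).pair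
        ((Primrec.ofNat Code).comp ((Primrec.snd.comp Primrec.unpair).comp
          Primrec.snd))).pair (Primrec.const 0))
  have h2 : PrimrecPred fun p : ℕ × ℕ =>
      evaln p.2.unpair.1 (Denumerable.ofNat Code p.2.unpair.2) 0 = some p.1 :=
    Primrec.eq.comp heval (Primrec.option_some.comp Primrec.fst)
  have h3 : PrimrecPred fun p : ℕ × ℕ => p.2.unpair.2 < p.1 :=
    Primrec.nat_lt.comp ((Primrec.snd.comp Primrec.unpair).comp Primrec.snd)
      Primrec.fst
  exact (h3.and h2).decide

lemma part1 : ∃ f : ℕ →. ℕ, Partrec f ∧ ∀ x, (Kc x < x) ↔ (f x).Dom := by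
  refine ⟨fun x => Nat.rfind (fun n => (bnd x n : Part Bool)), ?_, ?_⟩
  · exact Partrec.rfind (bnd_prim.to_comp.partrec₂)
  · intro x
    rw [Kc_lt_iff]; refine Iff.trans ?_ Nat.rfind_dom.symm
    constructor
    · rintro ⟨e, he, hx⟩
      rw [phi] at hx
      obtain ⟨k, hk⟩ := evaln_complete.1 hx
      refine ⟨Nat.pair k e, ?_, fun {m} _ => trivial⟩
      simp only [Part.coe_some, Part.mem_some_iff, bnd, Nat.unpair_pair,
        decide_eq_true_eq, eq_comm (a := true)]
      exact ⟨he, hk⟩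
    · rintro ⟨n, hn, -⟩
      simp only [Part.coe_some, Part.mem_some_iff, bnd, eq_comm (a := true),
        decide_eq_true_eq] at hn
      refine ⟨n.unpair.2, hn.1, ?_⟩
      rw [phi]
      exact evaln_complete.2 ⟨n.unpair.1, hn.2⟩

lemma part2 : ¬ ComputablePred (fun x => x ≤ Kc x) := by
  intro hcp
  obtain ⟨f, hf, hpf⟩ := ComputablePred.computable_iff.1 hcp
  have hfx : ∀ x, (x ≤ Kc x) ↔ f x = true := fun x =>
    iff_of_eq (congrFun hpf x)
  -- the search predicate
  set q : ℕ → ℕ → Bool := fun m x => f x && decide (m < x) with hq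
  have hdom : ∀ m, (Nat.rfind ((q m : ℕ →. Bool))).Dom := by
    intro m
    rw [Nat.rfind_dom]
    obtain ⟨x, hx1, hx2⟩ := rand_unbounded (m + 1)
    refine ⟨x, ?_, fun {k} _ => trivial⟩
    simp only [hq, PFun.coe_val, Part.mem_some_iff, Bool.and_eq_true,
      decide_eq_true_eq, eq_comm (a := true)]
    exact ⟨(hfx x).1 hx2, hx1⟩
  set g : ℕ → ℕ := fun m => (Nat.rfind ((q m : ℕ →. Bool))).get (hdom m) with hg
  have hgspec : ∀ m, m < g m ∧ g m ≤ Kc (g m) := by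
    intro m
    have := Nat.rfind_spec (Part.get_mem (hdom m))
    simp only [hq, PFun.coe_val, Part.mem_some_iff, Bool.and_eq_true,
      decide_eq_true_eq, eq_comm (a := true)] at this
    exact ⟨this.2, (hfx _).2 this.1⟩
  have hqcomp : Computable₂ q := by
    have h1 : Computable fun p : ℕ × ℕ => f p.2 := hf.comp Computable.snd
    have h2 : Computable fun p : ℕ × ℕ => decide (p.1 < p.2) :=
      (Primrec.nat_lt.comp Primrec.fst Primrec.snd).decide.to_comp
    exact (Primrec.and.to_comp.comp h1 h2 : Computable fun p : ℕ × ℕ => _)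
  have hgcomp : Computable g := by
    apply Partrec.of_eq_tot (f := fun m => Nat.rfind ((q m : ℕ →. Bool)))
    · exact Partrec.rfind hqcomp.partrec₂
    · exact fun m => Part.get_mem (hdom m)
  -- fixed point
  have hF : Partrec₂ fun (c : Code) (n : ℕ) =>
      (Part.some (g (Encodable.encode (c.comp (Code.const n)))) : Part ℕ) := by
    apply Computable₂.partrec₂
    have hcode : Primrec₂ fun (c : Code) (n : ℕ) => c.comp (Code.const n) :=
      (primrec₂_comp.comp Primrec.fst (primrec_const.comp Primrec.snd)).to₂
    exact (hgcomp.comp (Primrec.encode.comp₂ hcode).to_comp :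
      Computable fun p : Code × ℕ => _).to₂
  obtain ⟨c, hc⟩ := fixed_point₂ hF
  set m := Encodable.encode (c.comp (Code.const 0)) with hm
  have hx : g m ∈ phi m 0 := by
    rw [hm, phi_encode]
    have h0 : eval (c.comp (Code.const 0)) 0 = eval c 0 := by
      simp [eval, eval_const, Seq.seq, pure, PFun.pure, Part.bind_some, Part.bind_eq_bind]
      exact Part.bind_some _ _
    rw [h0, hc]
    simp
  have h1 := Kc_le hx
  have h2 := hgspec m
  omega

/-- The set of compressible numbers {x : K(x) < x} is recursively enumerable,
but the set of Kolmogorov-random numbers {x : K(x) ≥ x} is not recursive. -/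
theorem random_numbers_not_recursive :
    REPred' (fun x => Kc x < x) ∧ ¬ ComputablePred (fun x => x ≤ Kc x) := by
  exact ⟨part1, part2⟩
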